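/- Let A be a 4-dimensional real vector space, let J : A → A be a linear map with J∘J = −id, let ω be a real alternating 2-form on A satisfying ω(Jv, Jw) = ω(v,w) for all v,w ∈ A and ω(v, Jv) > 0 for all v ≠ 0, and let Ω : A × A → ℂ be a nonzero ℝ-bilinear alternating map satisfying Ω(Jv, w) = i·Ω(v,w) for all v,w ∈ A. On the direct sum A ⊕ ℝ³, let g¹, g², g³ denote the pullbacks to A ⊕ ℝ³ of the standard dual basis of ℝ³, and let ω, Re Ω, Im Ω also denote the pullbacks to A ⊕ ℝ³ of the corresponding alternating 2-forms on A. Define the real alternating 3-form φ' = g¹∧g²∧g³ + g¹∧ω − g²∧(Re Ω) + g³∧(Im Ω) on A ⊕ ℝ³. Then there exists a real linear equivalence u : ℝ⁷ ≃ A ⊕ ℝ³ such that φ'(u v₁, u v₂, u v₃) = φ₀(v₁, v₂, v₃) for all v₁, v₂, v₃ ∈ ℝ⁷ (i.e. φ' is a G₂ 3-form). -/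

import Mathlib

open Matrix

/-- The alternating 3-form `θ^{ijk}` on `ℝ⁷` (indices 0-based). -/
noncomputable def theta (i j k : Fin 7) (v₁ v₂ v₃ : Fin 7 → ℝ) : ℝ :=
  Matrix.det !![v₁ i, v₂ i, v₃ i; v₁ j, v₂ j, v₃ j; v₁ k, v₂ k, v₃ k]

/-- The standard G₂ 3-form `φ₀ = θ^{123}+θ^{145}+θ^{167}+θ^{246}−θ^{257}−θ^{347}−θ^{356}`. -/
noncomputable def phi0 (v₁ v₂ v₃ : Fin 7 → ℝ) : ℝ :=
  theta 0 1 2 v₁ v₂ v₃ + theta 0 3 4 v₁ v₂ v₃ + theta 0 5 6 v₁ v₂ v₃ +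
    theta 1 3 5 v₁ v₂ v₃ - theta 1 4 6 v₁ v₂ v₃ - theta 2 3 6 v₁ v₂ v₃ -
    theta 2 4 5 v₁ v₂ v₃

set_option maxHeartbeats 1000000 in
/-- The 3-form `φ' = g¹∧g²∧g³ + g¹∧ω − g²∧Re Ω + g³∧Im Ω` on `A ⊕ ℝ³` associated to an
`SU(2)`-structure `(J, ω, Ω)` on `A` is a G₂ 3-form: there is a linear equivalence
`u : ℝ⁷ ≃ A ⊕ ℝ³` with `φ' ∘ u = φ₀`. -/
theorem statement5
    (A : Type*) [AddCommGroup A] [Module ℝ A] [FiniteDimensional ℝ A]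
    (hdim : Module.finrank ℝ A = 4)
    (J : A →ₗ[ℝ] A) (hJ : J ∘ₗ J = -LinearMap.id)
    (ω : A →ₗ[ℝ] A →ₗ[ℝ] ℝ)
    (hω_alt : ∀ v, ω v v = 0)
    (hω_J : ∀ v w, ω (J v) (J w) = ω v w)
    (hω_pos : ∀ v : A, v ≠ 0 → 0 < ω v (J v))
    (Ω : A →ₗ[ℝ] A →ₗ[ℝ] ℂ)
    (hΩ_alt : ∀ v, Ω v v = 0)
    (hΩ_ne : Ω ≠ 0)
    (hΩ_J : ∀ v w, Ω (J v) w = Complex.I * Ω v w) :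
    ∃ u : (Fin 7 → ℝ) ≃ₗ[ℝ] (A × (Fin 3 → ℝ)),
      ∀ v₁ v₂ v₃ : Fin 7 → ℝ,
        -- g¹∧g²∧g³
        (Matrix.det !![(u v₁).2 0, (u v₂).2 0, (u v₃).2 0;
                       (u v₁).2 1, (u v₂).2 1, (u v₃).2 1;
                       (u v₁).2 2, (u v₂).2 2, (u v₃).2 2]
        -- g¹∧ω
        + ((u v₁).2 0 * ω (u v₂).1 (u v₃).1 - (u v₂).2 0 * ω (u v₁).1 (u v₃).1 +
            (u v₃).2 0 * ω (u v₁).1 (u v₂).1)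
        -- − g²∧Re Ω
        - ((u v₁).2 1 * (Ω (u v₂).1 (u v₃).1).re - (u v₂).2 1 * (Ω (u v₁).1 (u v₃).1).re +
            (u v₃).2 1 * (Ω (u v₁).1 (u v₂).1).re)
        -- + g³∧Im Ω
        + ((u v₁).2 2 * (Ω (u v₂).1 (u v₃).1).im - (u v₂).2 2 * (Ω (u v₁).1 (u v₃).1).im +
            (u v₃).2 2 * (Ω (u v₁).1 (u v₂).1).im))
        = phi0 v₁ v₂ v₃ := by
  have hJ2 : ∀ v : A, J (J v) = -v := by
    intro v
    have := LinearMap.ext_iff.mp hJ v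
    simpa using this
  have hωskew : ∀ v w : A, ω v w = -ω w v := by
    intro v w
    have h := hω_alt (v + w)
    simp only [map_add, LinearMap.add_apply, hω_alt] at h
    linarith
  have hΩskew : ∀ v w : A, Ω v w = -Ω w v := by
    intro v w
    have h := hΩ_alt (v + w)
    simp only [map_add, LinearMap.add_apply, hΩ_alt] at h
    linear_combination h
  have hΩ_J2 : ∀ v w : A, Ω v (J w) = Complex.I * Ω v w := by
    intro v w
    rw [hΩskew v (J w), hΩ_J, hΩskew w v]
    ring
  have hg_symm : ∀ x y : A, ω x (J y) = ω y (J x) := by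
    intro x y
    rw [← hω_J x (J y), hJ2, map_neg, hωskew (J x) y]
    ring
  obtain ⟨v₀, w₀, hc0⟩ : ∃ v w : A, Ω v w ≠ 0 := by
    by_contra h
    push_neg at h
    exact hΩ_ne (by ext v w : 2; simp [h])
  have hv₀ : v₀ ≠ 0 := by rintro rfl; simp at hc0
  obtain ⟨p, hp_def⟩ : ∃ x : ℝ, x = ω v₀ (J v₀) := ⟨_, rfl⟩
  have hp : 0 < p := hp_def ▸ hω_pos v₀ hv₀
  obtain ⟨e2, he2⟩ : ∃ x : A, x = J v₀ := ⟨_, rfl⟩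
  have hJe2 : J e2 = -v₀ := by rw [he2]; exact hJ2 v₀
  have hg11 : ω v₀ (J v₀) = p := hp_def.symm
  have hg12 : ω v₀ (J e2) = 0 := by rw [hJe2, map_neg, hω_alt]; ring
  have hg21 : ω e2 (J v₀) = 0 := by rw [← he2, hω_alt]
  have hg22 : ω e2 (J e2) = p := by rw [he2, hω_J]; exact hg11
  obtain ⟨a, ha_def⟩ : ∃ x : ℝ, x = ω w₀ (J v₀) / p := ⟨_, rfl⟩
  obtain ⟨b, hb_def⟩ : ∃ x : ℝ, x = ω w₀ (J e2) / p := ⟨_, rfl⟩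
  obtain ⟨e3, he3⟩ : ∃ x : A, x = w₀ - a • v₀ - b • e2 := ⟨_, rfl⟩
  obtain ⟨e4, he4⟩ : ∃ x : A, x = J e3 := ⟨_, rfl⟩
  have hg31 : ω e3 (J v₀) = 0 := by
    rw [he3]
    simp only [map_sub, _root_.map_smul, LinearMap.sub_apply, LinearMap.smul_apply, smul_eq_mul,
      hg21, hg11]
    rw [ha_def]
    field_simp
    ring
  have hg32 : ω e3 (J e2) = 0 := by
    rw [he3]
    simp only [map_sub, _root_.map_smul, LinearMap.sub_apply, LinearMap.smul_apply, smul_eq_mul,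
      hg22, hg12]
    rw [hb_def]
    field_simp
    ring
  have hω12 : ω v₀ e2 = p := by rw [he2]; exact hg11
  have hω21 : ω e2 v₀ = -p := by rw [hωskew, hω12]
  have hω31 : ω e3 v₀ = 0 := by
    have h14 : (v₀ : A) = -(J e2) := by rw [hJe2, neg_neg]
    rw [h14, map_neg, hg32, neg_zero]
  have hω32 : ω e3 e2 = 0 := by rw [he2]; exact hg31
  have hω13 : ω v₀ e3 = 0 := by rw [hωskew, hω31, neg_zero]
  have hω23 : ω e2 e3 = 0 := by rw [hωskew, hω32, neg_zero]
  have hω14 : ω v₀ e4 = 0 := by rw [he4, hg_symm, hg31]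
  have hω24 : ω e2 e4 = 0 := by rw [he4, hg_symm, hg32]
  have hω41 : ω e4 v₀ = 0 := by rw [hωskew, hω14, neg_zero]
  have hω42 : ω e4 e2 = 0 := by rw [hωskew, hω24, neg_zero]
  -- the complex number c
  obtain ⟨c, hc_def⟩ : ∃ z : ℂ, z = Ω v₀ w₀ := ⟨_, rfl⟩
  have hcne : c ≠ 0 := by rw [hc_def]; exact hc0
  have hΩ12 : Ω v₀ e2 = 0 := by rw [he2, hΩ_J2, hΩ_alt, mul_zero]
  have hΩ13 : Ω v₀ e3 = c := by
    rw [he3]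
    simp only [map_sub, _root_.map_smul, hΩ_alt, hΩ12, smul_zero, sub_zero]
    exact hc_def.symm
  have hΩ23 : Ω e2 e3 = Complex.I * c := by rw [he2, hΩ_J, hΩ13]
  have he3ne : e3 ≠ 0 := by
    intro h
    rw [h] at hΩ13
    simp at hΩ13
    exact hcne hΩ13.symm
  obtain ⟨q, hq_def⟩ : ∃ x : ℝ, x = ω e3 (J e3) := ⟨_, rfl⟩
  have hq : 0 < q := hq_def ▸ hω_pos e3 he3ne
  have hω34 : ω e3 e4 = q := by rw [he4]; exact hq_def.symm
  have hω43 : ω e4 e3 = -q := by rw [hωskew, hω34]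
  -- modulus and phase
  obtain ⟨m, hm_def⟩ : ∃ x : ℝ, x = ‖c‖ := ⟨_, rfl⟩
  have hm : 0 < m := by rw [hm_def]; exact norm_pos_iff.mpr hcne
  have hm2 : c.re ^ 2 + c.im ^ 2 = m ^ 2 := by
    rw [hm_def, Complex.sq_norm, Complex.normSq_apply]; ring
  obtain ⟨lre, hlre⟩ : ∃ x : ℝ, x = -c.re / m := ⟨_, rfl⟩
  obtain ⟨lim, hlim⟩ : ∃ x : ℝ, x = c.im / m := ⟨_, rfl⟩
  have hnorm : lre ^ 2 + lim ^ 2 = 1 := by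
    rw [hlre, hlim]
    field_simp
    linear_combination hm2
  obtain ⟨e1', he1'⟩ : ∃ x : A, x = lre • v₀ + lim • e2 := ⟨_, rfl⟩
  obtain ⟨e2', he2'⟩ : ∃ x : A, x = lre • e2 - lim • v₀ := ⟨_, rfl⟩
  have hJ1' : J e1' = e2' := by
    rw [he1', map_add, _root_.map_smul, _root_.map_smul, ← he2, hJe2, he2']
    module
  -- ω table on (e1', e2', e3, e4)
  have w12 : ω e1' e2' = p := by
    rw [he1', he2']
    simp only [map_add, map_sub, _root_.map_smul, LinearMap.add_apply, LinearMap.sub_apply,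
      LinearMap.smul_apply, smul_eq_mul, hω12, hω21, hω_alt]
    linear_combination p * hnorm
  have w13 : ω e1' e3 = 0 := by
    rw [he1']
    simp only [map_add, _root_.map_smul, LinearMap.add_apply, LinearMap.smul_apply, smul_eq_mul,
      hω13, hω23]
    ring
  have w14 : ω e1' e4 = 0 := by
    rw [he1']
    simp only [map_add, _root_.map_smul, LinearMap.add_apply, LinearMap.smul_apply, smul_eq_mul,
      hω14, hω24]
    ring
  have w23 : ω e2' e3 = 0 := by
    rw [he2']
    simp only [map_sub, _root_.map_smul, LinearMap.sub_apply, LinearMap.smul_apply, smul_eq_mul,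
      hω13, hω23]
    ring
  have w24 : ω e2' e4 = 0 := by
    rw [he2']
    simp only [map_sub, _root_.map_smul, LinearMap.sub_apply, LinearMap.smul_apply, smul_eq_mul,
      hω14, hω24]
    ring
  -- Ω table on (e1', e2', e3, e4)
  have hO13 : Ω e1' e3 = -(m : ℂ) := by
    have step : Ω e1' e3 = ((lre : ℂ) + (lim : ℂ) * Complex.I) * c := by
      rw [he1']
      simp only [map_add, _root_.map_smul, LinearMap.add_apply, LinearMap.smul_apply, hΩ13, hΩ23,
        Complex.real_smul]
      ring
    have h1 : lre * c.re - lim * c.im = -m := by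
      rw [hlre, hlim]
      have e : -c.re / m * c.re - c.im / m * c.im = -((c.re ^ 2 + c.im ^ 2) / m) := by ring
      rw [e, hm2]
      field_simp
    have h2 : lre * c.im + lim * c.re = 0 := by rw [hlre, hlim]; ring
    rw [step]
    apply Complex.ext
    · simp only [Complex.mul_re, Complex.add_re, Complex.add_im, Complex.ofReal_re,
        Complex.ofReal_im, Complex.mul_im, Complex.I_re, Complex.I_im, Complex.neg_re,
        Complex.neg_im]
      linear_combination h1
    · simp only [Complex.mul_re, Complex.add_re, Complex.add_im, Complex.ofReal_re,
        Complex.ofReal_im, Complex.mul_im, Complex.I_re, Complex.I_im, Complex.neg_re,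
        Complex.neg_im]
      linear_combination h2
  have hO14 : Ω e1' e4 = -(m : ℂ) * Complex.I := by rw [he4, hΩ_J2, hO13]; ring
  have hO23 : Ω e2' e3 = -(m : ℂ) * Complex.I := by rw [← hJ1', hΩ_J, hO13]; ring
  have hO24 : Ω e2' e4 = (m : ℂ) := by
    rw [he4, hΩ_J2, hO23]
    linear_combination -(m : ℂ) * Complex.I_sq
  have hO12 : Ω e1' e2' = 0 := by rw [← hJ1', hΩ_J2, hΩ_alt, mul_zero]
  have hO34 : Ω e3 e4 = 0 := by rw [he4, hΩ_J2, hΩ_alt, mul_zero]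
  -- scalars
  obtain ⟨t, ht_def⟩ : ∃ x : ℝ, x = (Real.sqrt (p * q) / m) ^ ((6 : ℝ)⁻¹) := ⟨_, rfl⟩
  have hbase : 0 < Real.sqrt (p * q) / m := by
    apply div_pos (Real.sqrt_pos.mpr (mul_pos hp hq)) hm
  have ht : 0 < t := by rw [ht_def]; exact Real.rpow_pos_of_pos hbase _
  have ht6 : t ^ (6 : ℕ) = Real.sqrt (p * q) / m := by
    rw [ht_def, ← Real.rpow_natCast (_ ^ _) 6, ← Real.rpow_mul hbase.le]
    norm_num
  have hsqrtpq : Real.sqrt p * Real.sqrt q = t ^ 6 * m := by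
    rw [← Real.sqrt_mul hp.le, ht6]
    field_simp
  obtain ⟨σ, hσ_def⟩ : ∃ x : ℝ, x = t ^ 2 / Real.sqrt p := ⟨_, rfl⟩
  obtain ⟨τ, hτ_def⟩ : ∃ x : ℝ, x = t ^ 2 / Real.sqrt q := ⟨_, rfl⟩
  have hsp : Real.sqrt p ≠ 0 := ne_of_gt (Real.sqrt_pos.mpr hp)
  have hsq : Real.sqrt q ≠ 0 := ne_of_gt (Real.sqrt_pos.mpr hq)
  have hσp : σ ^ 2 * p = t ^ 4 := by
    rw [hσ_def, div_pow, Real.sq_sqrt hp.le]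
    field_simp
  have hτq : τ ^ 2 * q = t ^ 4 := by
    rw [hτ_def, div_pow, Real.sq_sqrt hq.le]
    field_simp
  have hστ : σ * τ * m = (t ^ 2)⁻¹ := by
    rw [hσ_def, hτ_def, div_mul_div_comm, hsqrtpq]
    field_simp
  -- the final basis
  obtain ⟨f3, hf3⟩ : ∃ x : A, x = σ • e1' := ⟨_, rfl⟩
  obtain ⟨f4, hf4⟩ : ∃ x : A, x = σ • e2' := ⟨_, rfl⟩
  obtain ⟨f5, hf5⟩ : ∃ x : A, x = τ • e3 := ⟨_, rfl⟩
  obtain ⟨f6, hf6⟩ : ∃ x : A, x = τ • e4 := ⟨_, rfl⟩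
  -- ω table on f's
  have wf33 : ω f3 f3 = 0 := hω_alt f3
  have wf44 : ω f4 f4 = 0 := hω_alt f4
  have wf55 : ω f5 f5 = 0 := hω_alt f5
  have wf66 : ω f6 f6 = 0 := hω_alt f6
  have wf34 : ω f3 f4 = t ^ 4 := by
    simp only [hf3, hf4, _root_.map_smul, LinearMap.smul_apply, smul_eq_mul, w12]
    linear_combination hσp
  have wf43 : ω f4 f3 = -t ^ 4 := by rw [hωskew, wf34]
  have wf56 : ω f5 f6 = t ^ 4 := by
    simp only [hf5, hf6, _root_.map_smul, LinearMap.smul_apply, smul_eq_mul, hω34]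
    linear_combination hτq
  have wf65 : ω f6 f5 = -t ^ 4 := by rw [hωskew, wf56]
  have wf35 : ω f3 f5 = 0 := by
    simp only [hf3, hf5, _root_.map_smul, LinearMap.smul_apply, smul_eq_mul, w13, mul_zero]
  have wf36 : ω f3 f6 = 0 := by
    simp only [hf3, hf6, _root_.map_smul, LinearMap.smul_apply, smul_eq_mul, w14, mul_zero]
  have wf45 : ω f4 f5 = 0 := by
    simp only [hf4, hf5, _root_.map_smul, LinearMap.smul_apply, smul_eq_mul, w23, mul_zero]
  have wf46 : ω f4 f6 = 0 := by
    simp only [hf4, hf6, _root_.map_smul, LinearMap.smul_apply, smul_eq_mul, w24, mul_zero]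
  have wf53 : ω f5 f3 = 0 := by rw [hωskew, wf35, neg_zero]
  have wf63 : ω f6 f3 = 0 := by rw [hωskew, wf36, neg_zero]
  have wf54 : ω f5 f4 = 0 := by rw [hωskew, wf45, neg_zero]
  have wf64 : ω f6 f4 = 0 := by rw [hωskew, wf46, neg_zero]
  -- Ω table on f's
  have hστC : (σ : ℂ) * (τ : ℂ) * (m : ℂ) = (((t ^ 2)⁻¹ : ℝ) : ℂ) := by
    have := congrArg (fun x : ℝ => (x : ℂ)) hστ
    push_cast at this
    push_cast
    linear_combination this
  have Of35 : Ω f3 f5 = -(((t ^ 2)⁻¹ : ℝ) : ℂ) := by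
    simp only [hf3, hf5, _root_.map_smul, LinearMap.smul_apply, hO13, Complex.real_smul]
    linear_combination -hστC
  have Of36 : Ω f3 f6 = -(((t ^ 2)⁻¹ : ℝ) : ℂ) * Complex.I := by
    simp only [hf3, hf6, _root_.map_smul, LinearMap.smul_apply, hO14, Complex.real_smul]
    linear_combination -Complex.I * hστC
  have Of45 : Ω f4 f5 = -(((t ^ 2)⁻¹ : ℝ) : ℂ) * Complex.I := by
    simp only [hf4, hf5, _root_.map_smul, LinearMap.smul_apply, hO23, Complex.real_smul]
    linear_combination -Complex.I * hστC
  have Of46 : Ω f4 f6 = (((t ^ 2)⁻¹ : ℝ) : ℂ) := by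
    simp only [hf4, hf6, _root_.map_smul, LinearMap.smul_apply, hO24, Complex.real_smul]
    linear_combination hστC
  have Of34 : Ω f3 f4 = 0 := by
    simp only [hf3, hf4, _root_.map_smul, LinearMap.smul_apply, hO12, smul_zero]
  have Of56 : Ω f5 f6 = 0 := by
    simp only [hf5, hf6, _root_.map_smul, LinearMap.smul_apply, hO34, smul_zero]
  have Of33 : Ω f3 f3 = 0 := hΩ_alt f3
  have Of44 : Ω f4 f4 = 0 := hΩ_alt f4
  have Of55 : Ω f5 f5 = 0 := hΩ_alt f5
  have Of66 : Ω f6 f6 = 0 := hΩ_alt f6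
  have Of53 : Ω f5 f3 = (((t ^ 2)⁻¹ : ℝ) : ℂ) := by rw [hΩskew, Of35, neg_neg]
  have Of63 : Ω f6 f3 = (((t ^ 2)⁻¹ : ℝ) : ℂ) * Complex.I := by rw [hΩskew, Of36]; ring
  have Of54 : Ω f5 f4 = (((t ^ 2)⁻¹ : ℝ) : ℂ) * Complex.I := by rw [hΩskew, Of45]; ring
  have Of64 : Ω f6 f4 = -(((t ^ 2)⁻¹ : ℝ) : ℂ) := by rw [hΩskew, Of46]
  have Of43 : Ω f4 f3 = 0 := by rw [hΩskew, Of34, neg_zero]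
  have Of65 : Ω f6 f5 = 0 := by rw [hΩskew, Of56, neg_zero]
  -- the linear map
  have ht2 : (t : ℝ) ^ 2 ≠ 0 := pow_ne_zero 2 ht.ne'
  have ht4 : (t : ℝ) ^ 4 ≠ 0 := pow_ne_zero 4 ht.ne'
  obtain ⟨φ, hφ⟩ : ∃ φ : (Fin 7 → ℝ) →ₗ[ℝ] A × (Fin 3 → ℝ),
      ∀ x : Fin 7 → ℝ, φ x = (x 3 • f3 + x 4 • f4 + x 5 • f5 + x 6 • f6,
        ![(t ^ 4)⁻¹ * x 0, t ^ 2 * x 1, t ^ 2 * x 2]) := by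
    refine ⟨{ toFun := fun x => (x 3 • f3 + x 4 • f4 + x 5 • f5 + x 6 • f6,
                ![(t ^ 4)⁻¹ * x 0, t ^ 2 * x 1, t ^ 2 * x 2])
              map_add' := ?_
              map_smul' := ?_ }, fun _ => rfl⟩
    · intro x y
      refine Prod.ext ?_ ?_
      · show (x + y) 3 • f3 + (x + y) 4 • f4 + (x + y) 5 • f5 + (x + y) 6 • f6 =
          (x 3 • f3 + x 4 • f4 + x 5 • f5 + x 6 • f6) +
          (y 3 • f3 + y 4 • f4 + y 5 • f5 + y 6 • f6)
        simp only [Pi.add_apply]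
        module
      · funext i
        fin_cases i <;>
          simp [Pi.add_apply] <;> ring
    · intro r x
      refine Prod.ext ?_ ?_
      · show (r • x) 3 • f3 + (r • x) 4 • f4 + (r • x) 5 • f5 + (r • x) 6 • f6 =
          r • (x 3 • f3 + x 4 • f4 + x 5 • f5 + x 6 • f6)
        simp only [Pi.smul_apply, smul_eq_mul]
        module
      · funext i
        fin_cases i <;>
          simp [Pi.smul_apply, smul_eq_mul] <;> ring
  have hinj : Function.Injective φ := by
    rw [← LinearMap.ker_eq_bot, LinearMap.ker_eq_bot']
    intro x hx
    rw [hφ] at hx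
    have h2 := congrArg Prod.snd hx
    have h1 := congrArg Prod.fst hx
    simp only [Prod.snd_zero] at h2
    simp only [Prod.fst_zero] at h1
    have hx0 : x 0 = 0 := by
      have := congrFun h2 0
      simp at this
      rcases this with h | h
      · exact absurd h ht.ne'
      · exact h
    have hx1 : x 1 = 0 := by
      have := congrFun h2 1
      simp at this
      rcases this with h | h
      · exact absurd h ht.ne'
      · exact h
    have hx2 : x 2 = 0 := by
      have := congrFun h2 2
      simp at this
      rcases this with h | h
      · exact absurd h ht.ne'
      · exact h
    have key : ∀ y : A, ω (x 3 • f3 + x 4 • f4 + x 5 • f5 + x 6 • f6) y = 0 := by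
      intro y
      rw [h1, map_zero, LinearMap.zero_apply]
    have hx3 : x 3 = 0 := by
      have := key f4
      simp only [map_add, _root_.map_smul, LinearMap.add_apply, LinearMap.smul_apply,
        smul_eq_mul, wf34, wf44, wf54, wf64, mul_zero, add_zero, zero_add] at this
      exact by
        have : x 3 * t ^ 4 = 0 := by linarith
        rcases mul_eq_zero.mp this with h | h
        · exact h
        · exact absurd h ht4
    have hx4 : x 4 = 0 := by
      have := key f3
      simp only [map_add, _root_.map_smul, LinearMap.add_apply, LinearMap.smul_apply,
        smul_eq_mul, wf33, wf43, wf53, wf63, mul_zero, add_zero, zero_add] at this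
      exact by
        have h0 : x 4 * t ^ 4 = 0 := by linarith
        rcases mul_eq_zero.mp h0 with h | h
        · exact h
        · exact absurd h ht4
    have hx5 : x 5 = 0 := by
      have := key f6
      simp only [map_add, _root_.map_smul, LinearMap.add_apply, LinearMap.smul_apply,
        smul_eq_mul, wf36, wf46, wf56, wf66, mul_zero, add_zero, zero_add] at this
      exact by
        have h0 : x 5 * t ^ 4 = 0 := by linarith
        rcases mul_eq_zero.mp h0 with h | h
        · exact h
        · exact absurd h ht4
    have hx6 : x 6 = 0 := by
      have := key f5
      simp only [map_add, _root_.map_smul, LinearMap.add_apply, LinearMap.smul_apply,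
        smul_eq_mul, wf35, wf45, wf55, wf65, mul_zero, add_zero, zero_add] at this
      exact by
        have h0 : x 6 * t ^ 4 = 0 := by linarith
        rcases mul_eq_zero.mp h0 with h | h
        · exact h
        · exact absurd h ht4
    funext i
    fin_cases i
    · exact hx0
    · exact hx1
    · exact hx2
    · exact hx3
    · exact hx4
    · exact hx5
    · exact hx6
  have hrank : Module.finrank ℝ (Fin 7 → ℝ) = Module.finrank ℝ (A × (Fin 3 → ℝ)) := by
    rw [Module.finrank_prod, hdim, Module.finrank_pi, Module.finrank_pi]
    simp
  refine ⟨LinearMap.linearEquivOfInjective φ hinj hrank, ?_⟩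
  intro v₁ v₂ v₃
  have happ : ∀ x : Fin 7 → ℝ,
      (LinearMap.linearEquivOfInjective φ hinj hrank) x = φ x := fun x =>
    LinearMap.linearEquivOfInjective_apply hinj hrank x
  simp only [happ, hφ]
  simp only [Matrix.cons_val_zero, Matrix.cons_val_one, Matrix.head_cons,
    Matrix.cons_val_two, Matrix.tail_cons]
  rw [Matrix.det_fin_three]
  simp only [Matrix.cons_val', Matrix.cons_val_zero, Matrix.cons_val_one, Matrix.head_cons,
    Matrix.empty_val', Matrix.cons_val_fin_one, Matrix.head_fin_const, Matrix.of_apply,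
    Matrix.cons_val_two, Matrix.tail_cons]
  simp only [map_add, _root_.map_smul, LinearMap.add_apply, LinearMap.smul_apply,
    smul_eq_mul,
    wf33, wf34, wf35, wf36, wf43, wf44, wf45, wf46,
    wf53, wf54, wf55, wf56, wf63, wf64, wf65, wf66,
    Of33, Of34, Of35, Of36, Of43, Of44, Of45, Of46,
    Of53, Of54, Of55, Of56, Of63, Of64, Of65, Of66,
    Complex.real_smul, Complex.ofReal_mul, mul_zero, add_zero, zero_add,
    Complex.add_re, Complex.add_im, Complex.mul_re, Complex.mul_im,
    Complex.ofReal_re, Complex.ofReal_im, Complex.neg_re, Complex.neg_im,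
    Complex.I_re, Complex.I_im]
  simp only [phi0, theta, Matrix.det_fin_three, Matrix.cons_val', Matrix.cons_val_zero,
    Matrix.cons_val_one, Matrix.head_cons, Matrix.empty_val', Matrix.cons_val_fin_one,
    Matrix.head_fin_const, Matrix.of_apply, Matrix.cons_val]
  field_simp
  ring
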